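/- In a weakly strongly 2-nil-clean ring R, the element a^5 - a is nilpotent for every a ∈ R. -/

import Mathlib

/-- A ring is weakly strongly 2-nil-clean if every element is `±e ± f + n` with
`e, f` idempotents and `n` nilpotent, all commuting with each other. -/
def IsWeaklyStrongly2NilClean (R : Type*) [Ring R] : Prop :=
  ∀ a : R, ∃ e f n : R, IsIdempotentElem e ∧ IsIdempotentElem f ∧ IsNilpotent n ∧
    Commute e f ∧ Commute e n ∧ Commute f n ∧
    (a = e + f + n ∨ a = e - f + n ∨ a = -e + f + n ∨ a = -e - f + n)

/-- A ring is strongly 2-nil-clean if every element is `e + f + n` with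
`e, f` idempotents and `n` nilpotent, all commuting with each other. -/
def IsStrongly2NilClean (R : Type*) [Ring R] : Prop :=
  ∀ a : R, ∃ e f n : R, IsIdempotentElem e ∧ IsIdempotentElem f ∧ IsNilpotent n ∧
    Commute e f ∧ Commute e n ∧ Commute f n ∧ a = e + f + n

-- coercion transfer lemmas
lemma coe_nilp_of {R : Type*} [Ring R] {S : Subalgebra ℤ R} {x : S}
    (h : IsNilpotent (x : R)) : IsNilpotent x := by
  obtain ⟨k, hk⟩ := h
  exact ⟨k, Subtype.ext (by push_cast; exact hk)⟩

lemma coe_nilp_to {R : Type*} [Ring R] {S : Subalgebra ℤ R} {x : S}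
    (h : IsNilpotent x) : IsNilpotent (x : R) := by
  obtain ⟨k, hk⟩ := h
  exact ⟨k, by rw [← SubmonoidClass.coe_pow, hk, ZeroMemClass.coe_zero]⟩

lemma q_add {S : Type*} [CommRing S] {e f : S} (he : e * e = e) (hf : f * f = f) :
    (e + f) ^ 5 - 5 * (e + f) ^ 3 + 4 * (e + f) = 0 := by
  linear_combination (e^3 + 5*e^2*f + 10*e*f^2 + 10*f^3 - 4*e - 10*f + e^2 + 5*e*f + 10*f^2 - 4) * he
    + (5*e*f^2 + f^3 + 10*e - 4*f + 15*e*f + f^2 - 4) * hf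

lemma q_sub {S : Type*} [CommRing S] {e f : S} (he : e * e = e) (hf : f * f = f) :
    (e - f) ^ 5 - 5 * (e - f) ^ 3 + 4 * (e - f) = 0 := by
  linear_combination (e^3 - 5*e^2*f + 10*e*f^2 - 10*f^3 - 4*e + 10*f + e^2 - 5*e*f + 10*f^2 - 4) * he
    + (5*e*f^2 - f^3 - 10*e + 4*f - 5*e*f - f^2 + 4) * hf

lemma q_neg {S : Type*} [CommRing S] {b : S} (hb : b ^ 5 - 5 * b ^ 3 + 4 * b = 0) :
    (-b) ^ 5 - 5 * (-b) ^ 3 + 4 * (-b) = 0 := by linear_combination -hb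

lemma qnil {S : Type*} [CommRing S] {b n : S} (hb : b ^ 5 - 5 * b ^ 3 + 4 * b = 0)
    (hn : IsNilpotent n) :
    IsNilpotent ((b + n) ^ 5 - 5 * (b + n) ^ 3 + 4 * (b + n)) := by
  have key : (b + n) ^ 5 - 5 * (b + n) ^ 3 + 4 * (b + n) =
      n * ((b+n)^4 + (b+n)^3*b + (b+n)^2*b^2 + (b+n)*b^3 + b^4
        - 5*((b+n)^2 + (b+n)*b + b^2) + 4) + (b ^ 5 - 5 * b ^ 3 + 4 * b) := by ring
  rw [key, hb, add_zero]
  exact (Commute.all n _).isNilpotent_mul_right hn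

set_option maxHeartbeats 1000000 in
lemma qnil_cases {S : Type*} [CommRing S] (E F Nn : S) (hE : E * E = E) (hF : F * F = F)
    (hN : IsNilpotent Nn) (A : S)
    (hA : A = E + F + Nn ∨ A = E - F + Nn ∨ A = -E + F + Nn ∨ A = -E - F + Nn) :
    IsNilpotent (A ^ 5 - 5 * A ^ 3 + 4 * A) := by
  rcases hA with rfl | rfl | rfl | rfl
  · exact qnil (q_add hE hF) hN
  · exact qnil (q_sub hE hF) hN
  · have : -E + F + Nn = F - E + Nn := by ring
    rw [this]; exact qnil (q_sub hF hE) hN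
  · have : -E - F + Nn = -(E + F) + Nn := by ring
    rw [this]; exact qnil (q_neg (q_add hE hF)) hN

set_option maxHeartbeats 1000000 in
lemma lemA {R : Type*} [Ring R] (hR : IsWeaklyStrongly2NilClean R) (x : R) :
    IsNilpotent (x ^ 5 - 5 * x ^ 3 + 4 * x) := by
  obtain ⟨e, f, n, he, hf, hn, hef, hen, hfn, hcase⟩ := hR x
  have hcomm : ∀ u ∈ ({e, f, n} : Set R), ∀ v ∈ ({e, f, n} : Set R), u * v = v * u := by
    rintro u hu v hv
    simp only [Set.mem_insert_iff, Set.mem_singleton_iff] at hu hv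
    rcases hu with rfl | rfl | rfl <;> rcases hv with rfl | rfl | rfl
    · rfl
    · exact hef
    · exact hen
    · exact hef.symm
    · rfl
    · exact hfn
    · exact hen.symm
    · exact hfn.symm
    · rfl
  letI : CommRing (Algebra.adjoin ℤ ({e, f, n} : Set R)) :=
    Algebra.adjoinCommRingOfComm ℤ hcomm
  have heS : e ∈ Algebra.adjoin ℤ ({e, f, n} : Set R) := Algebra.subset_adjoin (by simp)
  have hfS : f ∈ Algebra.adjoin ℤ ({e, f, n} : Set R) := Algebra.subset_adjoin (by simp)
  have hnS : n ∈ Algebra.adjoin ℤ ({e, f, n} : Set R) := Algebra.subset_adjoin (by simp)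
  have hxS : x ∈ Algebra.adjoin ℤ ({e, f, n} : Set R) := by
    rcases hcase with hx | hx | hx | hx <;> rw [hx]
    · exact add_mem (add_mem heS hfS) hnS
    · exact add_mem (sub_mem heS hfS) hnS
    · exact add_mem (add_mem (neg_mem heS) hfS) hnS
    · exact add_mem (sub_mem (neg_mem heS) hfS) hnS
  set E : Algebra.adjoin ℤ ({e, f, n} : Set R) := ⟨e, heS⟩ with hEdef
  set F : Algebra.adjoin ℤ ({e, f, n} : Set R) := ⟨f, hfS⟩ with hFdef
  set Nn : Algebra.adjoin ℤ ({e, f, n} : Set R) := ⟨n, hnS⟩ with hNdef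
  set A : Algebra.adjoin ℤ ({e, f, n} : Set R) := ⟨x, hxS⟩ with hAdef
  have hE : E * E = E := Subtype.ext (by push_cast [hEdef]; exact he)
  have hF : F * F = F := Subtype.ext (by push_cast [hFdef]; exact hf)
  have hNn : IsNilpotent Nn := coe_nilp_of hn
  have hA : A = E + F + Nn ∨ A = E - F + Nn ∨ A = -E + F + Nn ∨ A = -E - F + Nn := by
    rcases hcase with hx | hx | hx | hx
    · exact Or.inl (Subtype.ext (by push_cast; exact hx))
    · exact Or.inr (Or.inl (Subtype.ext (by push_cast; exact hx)))
    · exact Or.inr (Or.inr (Or.inl (Subtype.ext (by push_cast; exact hx))))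
    · exact Or.inr (Or.inr (Or.inr (Subtype.ext (by push_cast; exact hx))))
  have h := coe_nilp_to (qnil_cases E F Nn hE hF hNn A hA)
  have hcoe : ((A ^ 5 - 5 * A ^ 3 + 4 * A :) : R) = x ^ 5 - 5 * x ^ 3 + 4 * x := by
    push_cast
    norm_cast
  rwa [hcoe] at h

lemma core {S : Type*} [CommRing S] (x : S) (hq : IsNilpotent (x ^ 5 - 5 * x ^ 3 + 4 * x))
    (h360 : IsNilpotent (360 : S)) : IsNilpotent (x ^ 5 - x) := by
  have hmem : (x ^ 5 - x) ^ 15 ∈ nilradical S := by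
    rw [← Ideal.Quotient.eq_zero_iff_mem]
    set π := Ideal.Quotient.mk (nilradical S) with hπ
    have hq0 : (π x) ^ 5 - 5 * (π x) ^ 3 + 4 * (π x) = 0 := by
      have h := Ideal.Quotient.eq_zero_iff_mem.2 (mem_nilradical.2 hq)
      simpa [map_sub, map_add, map_mul, map_pow, map_ofNat] using h
    have h3600 : (360 : S ⧸ nilradical S) = 0 := by
      have h := Ideal.Quotient.eq_zero_iff_mem.2 (mem_nilradical.2 h360)
      simpa [map_ofNat] using h
    set t := (π x) ^ 3 - π x with ht
    have ht3 : t ^ 3 = 36 * t := by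
      rw [ht]; linear_combination ((π x) ^ 4 + 2 * (π x) ^ 2 + 9) * hq0
    have hs : (π x) ^ 5 - π x = 5 * t := by rw [ht]; linear_combination hq0
    have hmap : π ((x ^ 5 - x) ^ 15) = ((π x) ^ 5 - π x) ^ 15 := by
      simp [map_pow, map_sub]
    have ht15 : t ^ 15 = 36 ^ 7 * t := by
      linear_combination (t ^ 12 + 36 * t ^ 10 + 36 ^ 2 * t ^ 8 + 36 ^ 3 * t ^ 6
        + 36 ^ 4 * t ^ 4 + 36 ^ 5 * t ^ 2 + 36 ^ 6) * ht3
    rw [hmap, hs]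
    calc (5 * t) ^ 15 = 5 ^ 15 * t ^ 15 := by ring
      _ = 5 ^ 15 * (36 ^ 7 * t) := by rw [ht15]
      _ = 360 * (5 ^ 14 * 18 * 36 ^ 5 * t) := by ring
      _ = 0 := by rw [h3600, zero_mul]
  obtain ⟨k, hk⟩ := mem_nilradical.1 hmem
  exact ⟨15 * k, by rw [pow_mul]; exact hk⟩

set_option maxHeartbeats 1000000 in
theorem pow_five_sub_self_nilpotent_of_wsnc {R : Type*} [Ring R]
    (hR : IsWeaklyStrongly2NilClean R) (a : R) : IsNilpotent (a ^ 5 - a) := by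
  have h120 : IsNilpotent (120 : R) := by
    have h := lemA hR 3
    norm_num at h
    exact h
  have h360R : IsNilpotent (360 : R) := by
    have h : (360 : R) = 120 * 3 := by norm_num
    rw [h]
    have hc : Commute (120 : R) 3 := by
      simpa using (Nat.cast_commute 3 (120 : R)).symm
    exact hc.isNilpotent_mul_right h120
  have hcomm : ∀ u ∈ ({a} : Set R), ∀ v ∈ ({a} : Set R), u * v = v * u := by
    rintro u hu v hv
    simp only [Set.mem_singleton_iff] at hu hv
    subst hu; subst hv; rfl
  letI : CommRing (Algebra.adjoin ℤ ({a} : Set R)) := Algebra.adjoinCommRingOfComm ℤ hcomm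
  have haS : a ∈ Algebra.adjoin ℤ ({a} : Set R) := Algebra.subset_adjoin (by simp)
  set A : Algebra.adjoin ℤ ({a} : Set R) := ⟨a, haS⟩ with hAdef
  have hq : IsNilpotent (A ^ 5 - 5 * A ^ 3 + 4 * A) := by
    apply coe_nilp_of
    have hcoe : ((A ^ 5 - 5 * A ^ 3 + 4 * A :) : R) = a ^ 5 - 5 * a ^ 3 + 4 * a := by
      push_cast
      norm_cast
    rw [hcoe]
    exact lemA hR a
  have h360 : IsNilpotent (360 : Algebra.adjoin ℤ ({a} : Set R)) := by
    apply coe_nilp_of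
    have hcoe : ((360 : Algebra.adjoin ℤ ({a} : Set R)) : R) = 360 := by norm_cast
    rw [hcoe]
    exact h360R
  have h := coe_nilp_to (core A hq h360)
  have hcoe : ((A ^ 5 - A :) : R) = a ^ 5 - a := by push_cast; norm_cast
  rwa [hcoe] at h
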